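/- For each z ≥ 0, the solution f_z of the half-normal Stein equation for h_z = 1_{(-∞,z]} satisfies sup_{x≥0, x≠z} |f_z'(x)| ≤ 1, and the function x ↦ x·f_z(x) is increasing on [0,∞). -/

import Mathlib

open MeasureTheory Real

/-- Standard normal density. -/
noncomputable def stdPhi (x : ℝ) : ℝ := Real.exp (-x^2/2) / Real.sqrt (2*Real.pi)

/-- Standard normal distribution function. -/
noncomputable def stdCDF (x : ℝ) : ℝ := ∫ t in Set.Iic x, stdPhi t

/-- The solution of the half-normal Stein equation for `h_z = 1_{(-∞,z]}`:
`f_z(x) = (F(x ∧ z) - F(x)F(z)) / p(x)` with `F = 2Φ - 1` and `p = 2φ`. -/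
noncomputable def fz (z x : ℝ) : ℝ :=
  ((2*stdCDF (min x z) - 1) - (2*stdCDF x - 1) * (2*stdCDF z - 1)) / (2*stdPhi x)

open Set Filter


lemma stdPhi_pos (x : ℝ) : 0 < stdPhi x := by
  apply div_pos (exp_pos _)
  positivity

lemma stdPhi_eq (x : ℝ) : stdPhi x = Real.exp (-(1/2) * x^2) / Real.sqrt (2*Real.pi) := by
  unfold stdPhi; ring_nf

lemma continuous_stdPhi : Continuous stdPhi := by
  unfold stdPhi
  fun_prop

lemma integrable_stdPhi : Integrable stdPhi := by
  have : stdPhi = fun x => Real.exp (-(1/2) * x^2) / Real.sqrt (2*Real.pi) := funext stdPhi_eq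
  rw [this]
  exact (integrable_exp_neg_mul_sq (by norm_num)).div_const _

lemma integral_stdPhi : ∫ x, stdPhi x = 1 := by
  simp_rw [stdPhi_eq]
  rw [integral_div, integral_gaussian]
  rw [show (π : ℝ)/(1/2) = 2*π by ring]
  rw [div_self (by positivity)]

lemma hasDerivAt_stdPhi (x : ℝ) : HasDerivAt stdPhi (-x * stdPhi x) x := by
  have h : HasDerivAt (fun y : ℝ => -y^2/2) (-x) x := by
    have := ((hasDerivAt_pow 2 x).neg).div_const 2
    simpa using this.congr_deriv (by ring)
  have := (h.exp).div_const (Real.sqrt (2*Real.pi))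
  unfold stdPhi
  refine this.congr_deriv ?_
  field_simp

lemma stdCDF_sub (a b : ℝ) : stdCDF b - stdCDF a = ∫ t in a..b, stdPhi t :=
  intervalIntegral.integral_Iic_sub_Iic integrable_stdPhi.integrableOn integrable_stdPhi.integrableOn

lemma hasDerivAt_stdCDF (x : ℝ) : HasDerivAt stdCDF (stdPhi x) x := by
  have key : ∀ y : ℝ, stdCDF y = stdCDF 0 + ∫ t in (0:ℝ)..y, stdPhi t := by
    intro y; rw [← stdCDF_sub]; ring
  have h : HasDerivAt (fun y => stdCDF 0 + ∫ t in (0:ℝ)..y, stdPhi t) (stdPhi x) x := by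
    apply HasDerivAt.const_add
    exact intervalIntegral.integral_hasDerivAt_right
      (continuous_stdPhi.intervalIntegrable _ _)
      (continuous_stdPhi.stronglyMeasurableAtFilter _ _)
      continuous_stdPhi.continuousAt
  exact h.congr_of_eventuallyEq (Filter.Eventually.of_forall key)

lemma stdCDF_mono : Monotone stdCDF := by
  intro a b hab
  have := stdCDF_sub a b
  rw [intervalIntegral.integral_of_le hab] at this
  nlinarith [setIntegral_nonneg (μ := volume) (measurableSet_Ioc (a := a) (b := b))
    (fun t _ => (stdPhi_pos t).le)]

lemma stdCDF_nonneg (x : ℝ) : 0 ≤ stdCDF x :=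
  setIntegral_nonneg measurableSet_Iic (fun t _ => (stdPhi_pos t).le)

lemma one_sub_stdCDF (x : ℝ) : 1 - stdCDF x = ∫ t in Set.Ioi x, stdPhi t := by
  have := intervalIntegral.integral_Iic_add_Ioi (b := x) (f := stdPhi) (μ := volume)
    integrable_stdPhi.integrableOn integrable_stdPhi.integrableOn
  rw [← integral_stdPhi]
  unfold stdCDF
  linarith

lemma stdCDF_le_one (x : ℝ) : stdCDF x ≤ 1 := by
  have := one_sub_stdCDF x
  nlinarith [setIntegral_nonneg (μ := volume) (measurableSet_Ioi (a := x)) (fun t _ => (stdPhi_pos t).le)]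

lemma stdCDF_zero : stdCDF 0 = 1/2 := by
  have heven : ∀ t : ℝ, stdPhi (-t) = stdPhi t := by
    intro t; unfold stdPhi; ring_nf
  have h1 : stdCDF 0 = ∫ t in Set.Ioi (0:ℝ), stdPhi t := by
    unfold stdCDF
    rw [show (0:ℝ) = -0 by ring, ← integral_comp_neg_Iic]
    simp_rw [heven]
    norm_num
  have := one_sub_stdCDF 0
  linarith

lemma stdCDF_nonneg_half {x : ℝ} (hx : 0 ≤ x) : 1/2 ≤ stdCDF x := by
  rw [← stdCDF_zero]; exact stdCDF_mono hx

lemma tendsto_stdPhi_zero : Tendsto stdPhi atTop (nhds 0) := by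
  have h1 : Tendsto (fun t : ℝ => -t^2/2) atTop atBot := by
    apply Filter.Tendsto.atBot_div_const (by norm_num)
    exact tendsto_neg_atBot_iff.mpr (tendsto_pow_atTop (by norm_num))
  have := (Real.tendsto_exp_atBot.comp h1).div_const (Real.sqrt (2*Real.pi))
  unfold stdPhi
  simpa only [Function.comp_def, zero_div] using this

lemma integral_t_stdPhi {x : ℝ} (hx : 0 ≤ x) :
    (∫ t in Set.Ioi x, t * stdPhi t) = stdPhi x ∧
    IntegrableOn (fun t => t * stdPhi t) (Set.Ioi x) := by
  have hderiv : ∀ t ∈ Set.Ici x, HasDerivAt (fun s => -stdPhi s) (t * stdPhi t) t := by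
    intro t _
    exact (hasDerivAt_stdPhi t).neg.congr_deriv (by ring)
  have hpos : ∀ t ∈ Set.Ioi x, 0 ≤ t * stdPhi t := fun t ht =>
    mul_nonneg (le_of_lt (lt_of_le_of_lt hx ht)) (stdPhi_pos t).le
  have htend : Tendsto (fun s => -stdPhi s) atTop (nhds 0) := by
    simpa using tendsto_stdPhi_zero.neg
  constructor
  · have := integral_Ioi_of_hasDerivAt_of_nonneg' hderiv hpos htend
    simpa using this
  · exact integrableOn_Ioi_deriv_of_nonneg' hderiv hpos htend

lemma mills_upper {x : ℝ} (hx : 0 ≤ x) : x * (1 - stdCDF x) ≤ stdPhi x := by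
  obtain ⟨hval, hint⟩ := integral_t_stdPhi hx
  rw [one_sub_stdCDF, ← integral_const_mul, ← hval]
  apply setIntegral_mono_on (integrable_stdPhi.const_mul x).integrableOn hint measurableSet_Ioi
  intro t ht
  exact mul_le_mul_of_nonneg_right (le_of_lt ht) (stdPhi_pos t).le

lemma mills_lower {x : ℝ} (hx : 0 ≤ x) : x * stdPhi x ≤ (1 + x^2) * (1 - stdCDF x) := by
  set negH : ℝ → ℝ := fun t => -(t * stdPhi t / (1 + t^2)) with hnegH
  have hderiv : ∀ t ∈ Set.Ici x, HasDerivAt negH (stdPhi t * (1 - 2/(1+t^2)^2)) t := by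
    intro t _
    have h1 : HasDerivAt (fun s : ℝ => s * stdPhi s)
        (stdPhi t + t * (-t * stdPhi t)) t :=
      (hasDerivAt_id' (x := t)).mul (hasDerivAt_stdPhi t) |>.congr_deriv (by ring)
    have h2 : HasDerivAt (fun s : ℝ => 1 + s^2) (2*t) t := by
      simpa using (hasDerivAt_pow 2 t).const_add 1
    have hne : (1 + t^2) ≠ 0 := by positivity
    have := (h1.div h2 hne).neg
    refine this.congr_deriv ?_
    field_simp
    ring
  have htend : Tendsto negH atTop (nhds 0) := by
    apply squeeze_zero_norm _ tendsto_stdPhi_zero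
    intro t
    have h1 : |t| / (1 + t^2) ≤ 1 := by
      rw [div_le_one (by positivity)]
      nlinarith [abs_nonneg t, sq_abs t]
    have h2 : ‖negH t‖ = |t| / (1+t^2) * stdPhi t := by
      rw [hnegH]
      rw [norm_neg, Real.norm_eq_abs, abs_div, abs_mul, abs_of_pos (show (0:ℝ) < 1 + t^2 by positivity),
        abs_of_pos (stdPhi_pos t)]
      ring
    rw [h2]
    calc |t| / (1+t^2) * stdPhi t ≤ 1 * stdPhi t :=
          mul_le_mul_of_nonneg_right h1 (stdPhi_pos t).le
      _ = stdPhi t := one_mul _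
  have hint : IntegrableOn (fun t => stdPhi t * (1 - 2/(1+t^2)^2)) (Set.Ioi x) := by
    apply Integrable.mono (integrable_stdPhi.integrableOn (s := Set.Ioi x))
    · apply Continuous.aestronglyMeasurable
      apply continuous_stdPhi.mul
      apply Continuous.sub continuous_const
      apply Continuous.div continuous_const (by fun_prop)
      intro t; positivity
    · apply Filter.Eventually.of_forall
      intro t
      rw [Real.norm_eq_abs, Real.norm_eq_abs, abs_mul, abs_of_pos (stdPhi_pos t)]
      have h3 : 0 < (1+t^2)^2 := by positivity
      have h4 : (0:ℝ) ≤ 2/(1+t^2)^2 := by positivity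
      have h5 : 2/(1+t^2)^2 ≤ 2 := by
        rw [div_le_iff₀ h3]; nlinarith
      have : |1 - 2/(1+t^2)^2| ≤ 1 := by
        rw [abs_le]; constructor <;> linarith
      calc stdPhi t * |1 - 2/(1+t^2)^2| ≤ stdPhi t * 1 :=
            mul_le_mul_of_nonneg_left this (stdPhi_pos t).le
        _ = stdPhi t := mul_one _
  have hcont : ContinuousWithinAt negH (Set.Ici x) x :=
    ((hderiv x Set.self_mem_Ici).continuousAt).continuousWithinAt
  have hval := integral_Ioi_of_hasDerivAt_of_tendsto hcont
    (fun t ht => hderiv t (Set.mem_Ici.mpr (le_of_lt ht))) hint htend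
  have hle : (∫ t in Set.Ioi x, stdPhi t * (1 - 2/(1+t^2)^2)) ≤ ∫ t in Set.Ioi x, stdPhi t := by
    apply setIntegral_mono_on hint integrable_stdPhi.integrableOn measurableSet_Ioi
    intro t _
    nlinarith [stdPhi_pos t, sq_nonneg (1+t^2), div_nonneg (show (0:ℝ) ≤ 2 by norm_num)
      (sq_nonneg (1+t^2)), stdPhi_pos t]
  rw [← one_sub_stdCDF] at hle
  rw [hval] at hle
  have hxpos : (0:ℝ) < 1 + x^2 := by positivity
  rw [hnegH] at hle
  simp only [zero_sub, neg_neg] at hle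
  calc x * stdPhi x = (1+x^2) * (x * stdPhi x / (1+x^2)) := by field_simp
    _ ≤ (1+x^2) * (1 - stdCDF x) := mul_le_mul_of_nonneg_left hle hxpos.le

lemma twoPhi_pos (x : ℝ) : 0 < 2 * stdPhi x := by linarith [stdPhi_pos x]

lemma stdPhi_anti {x y : ℝ} (hx : 0 ≤ x) (hxy : x ≤ y) : stdPhi y ≤ stdPhi x := by
  unfold stdPhi
  apply div_le_div_of_nonneg_right _ (by positivity)
  apply Real.exp_le_exp.mpr
  nlinarith

lemma hasDerivAt_G (x : ℝ) :
    HasDerivAt (fun y => (2*stdCDF y - 1)/(2*stdPhi y))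
      (1 + x*(2*stdCDF x - 1)/(2*stdPhi x)) x := by
  have h1 : HasDerivAt (fun y => 2*stdCDF y - 1) (2*stdPhi x) x :=
    ((hasDerivAt_stdCDF x).const_mul 2).sub_const 1
  have h2 : HasDerivAt (fun y => 2*stdPhi y) (2*(-x*stdPhi x)) x :=
    (hasDerivAt_stdPhi x).const_mul 2
  have := h1.div h2 (ne_of_gt (twoPhi_pos x))
  refine this.congr_deriv ?_
  have hp := stdPhi_pos x
  field_simp
  ring

lemma hasDerivAt_K (x : ℝ) :
    HasDerivAt (fun y => (2 - 2*stdCDF y)/(2*stdPhi y))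
      (-1 + x*(2 - 2*stdCDF x)/(2*stdPhi x)) x := by
  have h1 : HasDerivAt (fun y => 2 - 2*stdCDF y) (-(2*stdPhi x)) x :=
    ((hasDerivAt_stdCDF x).const_mul 2).const_sub 2
  have h2 : HasDerivAt (fun y => 2*stdPhi y) (2*(-x*stdPhi x)) x :=
    (hasDerivAt_stdPhi x).const_mul 2
  have := h1.div h2 (ne_of_gt (twoPhi_pos x))
  refine this.congr_deriv ?_
  have hp := stdPhi_pos x
  field_simp
  ring

lemma fz_eq_left {z x : ℝ} (h : x ≤ z) :
    fz z x = (2 - 2*stdCDF z) * ((2*stdCDF x - 1)/(2*stdPhi x)) := by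
  unfold fz
  rw [min_eq_left h]
  ring

lemma fz_eq_right {z x : ℝ} (h : z ≤ x) :
    fz z x = (2*stdCDF z - 1) * ((2 - 2*stdCDF x)/(2*stdPhi x)) := by
  unfold fz
  rw [min_eq_right h]
  ring

noncomputable def uu (x : ℝ) : ℝ := x * ((2*stdCDF x - 1)/(2*stdPhi x))
noncomputable def vv (x : ℝ) : ℝ := x * ((2 - 2*stdCDF x)/(2*stdPhi x))

lemma hasDerivAt_uu (x : ℝ) :
    HasDerivAt uu ((2*stdCDF x - 1)/(2*stdPhi x)
      + x * (1 + x*(2*stdCDF x - 1)/(2*stdPhi x))) x := by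
  have := (hasDerivAt_id' (x := x)).mul (hasDerivAt_G x)
  unfold uu
  refine this.congr_deriv ?_
  ring

lemma hasDerivAt_vv (x : ℝ) :
    HasDerivAt vv ((2 - 2*stdCDF x)/(2*stdPhi x)
      + x * (-1 + x*(2 - 2*stdCDF x)/(2*stdPhi x))) x := by
  have := (hasDerivAt_id' (x := x)).mul (hasDerivAt_K x)
  unfold vv
  refine this.congr_deriv ?_
  ring

lemma monotoneOn_uu : MonotoneOn uu (Set.Ici 0) := by
  apply monotoneOn_of_deriv_nonneg (convex_Ici 0)
  · exact fun x _ => ((hasDerivAt_uu x).continuousAt).continuousWithinAt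
  · exact fun x _ => ((hasDerivAt_uu x).differentiableAt).differentiableWithinAt
  · intro x hx
    rw [interior_Ici] at hx
    rw [(hasDerivAt_uu x).deriv]
    have h0 : (0:ℝ) < x := hx
    have h1 : 0 ≤ 2*stdCDF x - 1 := by linarith [stdCDF_nonneg_half h0.le]
    have h2 := twoPhi_pos x
    have h3 : 0 ≤ (2*stdCDF x - 1)/(2*stdPhi x) := div_nonneg h1 h2.le
    have h4 : 0 ≤ x*(2*stdCDF x - 1)/(2*stdPhi x) :=
      div_nonneg (mul_nonneg h0.le h1) h2.le
    nlinarith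

lemma monotoneOn_vv : MonotoneOn vv (Set.Ici 0) := by
  apply monotoneOn_of_deriv_nonneg (convex_Ici 0)
  · exact fun x _ => ((hasDerivAt_vv x).continuousAt).continuousWithinAt
  · exact fun x _ => ((hasDerivAt_vv x).differentiableAt).differentiableWithinAt
  · intro x hx
    rw [interior_Ici] at hx
    rw [(hasDerivAt_vv x).deriv]
    have h0 : (0:ℝ) < x := hx
    have h2 := twoPhi_pos x
    have hm := mills_lower h0.le
    -- (2-2Φx)/(2φx) + x*(-1 + x(2-2Φx)/(2φx)) ≥ 0
    have key : (2 - 2*stdCDF x)/(2*stdPhi x) + x * (-1 + x*(2 - 2*stdCDF x)/(2*stdPhi x))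
        = ((1+x^2) * (1 - stdCDF x) - x * stdPhi x) / stdPhi x := by
      have hp : stdPhi x ≠ 0 := (stdPhi_pos x).ne'
      field_simp
      ring
    rw [key]
    apply div_nonneg _ (stdPhi_pos x).le
    linarith [mills_lower h0.le]

theorem stmt12 (z : ℝ) (hz : 0 ≤ z) :
    (∀ x : ℝ, 0 ≤ x → x ≠ z → ∀ d : ℝ, HasDerivAt (fz z) d x → |d| ≤ 1) ∧
    MonotoneOn (fun x => x * fz z x) (Set.Ici 0) := by
  constructor
  · intro x hx hxz d hd
    rcases lt_or_gt_of_ne hxz with hlt | hgt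
    · -- x < z
      have hev : fz z =ᶠ[nhds x]
          fun y => (2 - 2*stdCDF z) * ((2*stdCDF y - 1)/(2*stdPhi y)) := by
        filter_upwards [Iio_mem_nhds hlt] with y hy
        rw [fz_eq_left (le_of_lt hy)]
      have hd0 : HasDerivAt (fz z)
          ((2 - 2*stdCDF z) * (1 + x*(2*stdCDF x - 1)/(2*stdPhi x))) x :=
        HasDerivAt.congr_of_eventuallyEq ((hasDerivAt_G x).const_mul (2 - 2*stdCDF z)) hev
      have hdd : d = (2 - 2*stdCDF z) * (1 + x*(2*stdCDF x - 1)/(2*stdPhi x)) :=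
        hd.unique hd0
      have hA : 0 ≤ 2*stdCDF x - 1 := by linarith [stdCDF_nonneg_half hx]
      have hAB : 2*stdCDF x - 1 ≤ 2*stdCDF z - 1 := by
        linarith [stdCDF_mono hlt.le]
      have hB1 : 2*stdCDF z - 1 ≤ 1 := by linarith [stdCDF_le_one z]
      have hBnn : 0 ≤ 2*stdCDF z - 1 := by linarith [stdCDF_nonneg_half hz]
      have hphi : stdPhi z ≤ stdPhi x := stdPhi_anti hx hlt.le
      have hmz : z * (1 - stdCDF z) ≤ stdPhi z := mills_upper hz
      have hpx := stdPhi_pos x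
      have hdiv : 0 ≤ x*(2*stdCDF x - 1)/(2*stdPhi x) :=
        div_nonneg (mul_nonneg hx hA) (twoPhi_pos x).le
      rw [hdd, abs_le]
      constructor
      · nlinarith
      · have hrw : (2 - 2*stdCDF z) * (1 + x*(2*stdCDF x - 1)/(2*stdPhi x))
            = (2 - 2*stdCDF z) * ((2*stdPhi x + x*(2*stdCDF x - 1))/(2*stdPhi x)) := by
          field_simp
        rw [hrw, ← mul_div_assoc, div_le_one (twoPhi_pos x)]
        have e1 : x*(2*stdCDF x - 1) ≤ z*(2*stdCDF z - 1) :=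
          mul_le_mul hlt.le hAB hA hz
        have e2 : (2 - 2*stdCDF z) * (z*(2*stdCDF z - 1))
            ≤ (2*stdCDF z - 1) * (2*stdPhi z) := by nlinarith
        have e3 : (2*stdCDF z - 1) * (2*stdPhi z) ≤ (2*stdCDF z - 1) * (2*stdPhi x) := by
          nlinarith
        nlinarith
    · -- z < x
      have hev : fz z =ᶠ[nhds x]
          fun y => (2*stdCDF z - 1) * ((2 - 2*stdCDF y)/(2*stdPhi y)) := by
        filter_upwards [Ioi_mem_nhds hgt] with y hy
        rw [fz_eq_right (le_of_lt hy)]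
      have hd0 : HasDerivAt (fz z)
          ((2*stdCDF z - 1) * (-1 + x*(2 - 2*stdCDF x)/(2*stdPhi x))) x :=
        HasDerivAt.congr_of_eventuallyEq ((hasDerivAt_K x).const_mul (2*stdCDF z - 1)) hev
      have hdd : d = (2*stdCDF z - 1) * (-1 + x*(2 - 2*stdCDF x)/(2*stdPhi x)) :=
        hd.unique hd0
      have hB1 : 2*stdCDF z - 1 ≤ 1 := by linarith [stdCDF_le_one z]
      have hBnn : 0 ≤ 2*stdCDF z - 1 := by linarith [stdCDF_nonneg_half hz]
      have hK0 : 0 ≤ x*(2 - 2*stdCDF x)/(2*stdPhi x) :=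
        div_nonneg (mul_nonneg hx (by linarith [stdCDF_le_one x])) (twoPhi_pos x).le
      have hK1 : x*(2 - 2*stdCDF x)/(2*stdPhi x) ≤ 1 := by
        rw [div_le_one (twoPhi_pos x)]
        nlinarith [mills_upper hx]
      rw [hdd, abs_le]
      constructor <;> nlinarith
  · -- monotonicity
    have hBnn : 0 ≤ 2*stdCDF z - 1 := by linarith [stdCDF_nonneg_half hz]
    have h1B : 0 ≤ 2 - 2*stdCDF z := by linarith [stdCDF_le_one z]
    have key : ∀ y : ℝ, y ≤ z → y * fz z y = (2 - 2*stdCDF z) * uu y := by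
      intro y hy; rw [fz_eq_left hy]; unfold uu; ring
    have key2 : ∀ y : ℝ, z ≤ y → y * fz z y = (2*stdCDF z - 1) * vv y := by
      intro y hy; rw [fz_eq_right hy]; unfold vv; ring
    intro a ha b hb hab
    simp only
    rcases le_total b z with h | h
    · rw [key a (hab.trans h), key b h]
      exact mul_le_mul_of_nonneg_left (monotoneOn_uu ha hb hab) h1B
    · rcases le_total a z with h' | h'
      · have hz0 : z ∈ Set.Ici (0:ℝ) := hz
        calc a * fz z a = (2 - 2*stdCDF z) * uu a := key a h'
          _ ≤ (2 - 2*stdCDF z) * uu z :=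
              mul_le_mul_of_nonneg_left (monotoneOn_uu ha hz0 h') h1B
          _ = z * fz z z := (key z le_rfl).symm
          _ = (2*stdCDF z - 1) * vv z := key2 z le_rfl
          _ ≤ (2*stdCDF z - 1) * vv b :=
              mul_le_mul_of_nonneg_left (monotoneOn_vv hz0 hb h) hBnn
          _ = b * fz z b := (key2 b h).symm
      · rw [key2 a h', key2 b (h'.trans hab)]
        exact mul_le_mul_of_nonneg_left (monotoneOn_vv (hz.trans h') hb hab) hBnn
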